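/- Fix N ∈ ℕ, N ≥ 1, and let A_N be the set of all continuous functions f : [0,1] → ℝ with f(0) = 0 for which there exist k ≤ N, a partition 0 = t₀ < t₁ < ⋯ < t_k = 1 and slopes a₁, …, a_k ∈ [−N, N] such that f is affine with slope a_i on each interval [t_{i−1}, t_i]. Then A_N is totally bounded in the variation metric: for every ε > 0 there exists a finite subset F ⊆ A_N such that for every f ∈ A_N there is g ∈ F with Var_{[0,1]}(f − g) < ε, where Var_{[0,1]}(h) denotes the total variation of h on [0,1]. -/

import Mathlib

/-- The family `A_N` of continuous piecewise linear functions on `[0,1]` starting at `0`,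
with at most `N` pieces and slopes bounded by `N` in absolute value. -/
def piecewiseLinearSet (N : ℕ) : Set (ℝ → ℝ) :=
  {f | ContinuousOn f (Set.Icc 0 1) ∧ f 0 = 0 ∧
    ∃ k : ℕ, 1 ≤ k ∧ k ≤ N ∧
      ∃ t : ℕ → ℝ, t 0 = 0 ∧ t k = 1 ∧ (∀ i < k, t i < t (i + 1)) ∧
        ∃ a : ℕ → ℝ, (∀ i < k, |a i| ≤ (N : ℝ)) ∧
          ∀ i < k, ∀ s ∈ Set.Icc (t i) (t (i + 1)), f s = f (t i) + a i * (s - t i)}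


/-- Canonical piecewise linear function with breakpoints `t 0 ≤ … ≤ t k` and slopes `a i`. -/
noncomputable def pl (k : ℕ) (t a : ℕ → ℝ) : ℝ → ℝ :=
  fun x => ∑ i ∈ Finset.range k, a i * (min (max x (t i)) (t (i + 1)) - t i)

lemma mono_pair {k : ℕ} {t : ℕ → ℝ} (h : ∀ i < k, t i ≤ t (i + 1)) :
    ∀ i j, i ≤ j → j ≤ k → t i ≤ t j := by
  intro i j hij hjk
  induction j with
  | zero => have : i = 0 := by omega
            simp [this]
  | succ j ih =>
    rcases eq_or_lt_of_le hij with rfl | hlt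
    · exact le_rfl
    · exact (ih (by omega) (by omega)).trans (h j (by omega))

lemma pl_congr {k : ℕ} {t t' a a' : ℕ → ℝ} (ht : ∀ i ≤ k, t i = t' i)
    (ha : ∀ i < k, a i = a' i) : pl k t a = pl k t' a' := by
  funext x
  unfold pl
  refine Finset.sum_congr rfl fun i hi => ?_
  rw [Finset.mem_range] at hi
  rw [ht i (by omega), ht (i + 1) (by omega), ha i hi]

lemma pl_continuous (k : ℕ) (t a : ℕ → ℝ) : Continuous (pl k t a) := by
  unfold pl
  apply continuous_finset_sum
  intro i _
  exact continuous_const.mul (((continuous_id.max continuous_const).min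
    continuous_const).sub continuous_const)

lemma pl_zero {k : ℕ} {t : ℕ → ℝ} (a : ℕ → ℝ) (ht0 : t 0 = 0)
    (tm : ∀ i j, i ≤ j → j ≤ k → t i ≤ t j) : pl k t a 0 = 0 := by
  unfold pl
  apply Finset.sum_eq_zero
  intro i hi
  rw [Finset.mem_range] at hi
  have h0i : (0:ℝ) ≤ t i := ht0 ▸ tm 0 i (by omega) (by omega)
  have hii : t i ≤ t (i + 1) := tm i (i + 1) (by omega) (by omega)
  rw [max_eq_right h0i, min_eq_left hii, sub_self, mul_zero]

lemma pl_sub {k : ℕ} {t a : ℕ → ℝ} (tm : ∀ i j, i ≤ j → j ≤ k → t i ≤ t j) {i : ℕ}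
    (hik : i < k) {x y : ℝ} (hx : x ∈ Set.Icc (t i) (t (i + 1)))
    (hy : y ∈ Set.Icc (t i) (t (i + 1))) :
    pl k t a y - pl k t a x = a i * (y - x) := by
  obtain ⟨hx1, hx2⟩ := hx
  obtain ⟨hy1, hy2⟩ := hy
  unfold pl
  rw [← Finset.sum_sub_distrib]
  rw [Finset.sum_eq_single_of_mem i (Finset.mem_range.2 hik)]
  · rw [max_eq_left hx1, max_eq_left hy1, min_eq_left hx2, min_eq_left hy2]
    ring
  · intro j hj hji
    rw [Finset.mem_range] at hj
    rcases lt_or_gt_of_ne hji with hlt | hgt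
    · have h1 : t (j + 1) ≤ t i := tm (j + 1) i (by omega) (by omega)
      have h2 : t j ≤ t (j + 1) := tm j (j + 1) (by omega) (by omega)
      have hxj : t j ≤ x := (h2.trans h1).trans hx1
      have hyj : t j ≤ y := (h2.trans h1).trans hy1
      rw [max_eq_left hxj, max_eq_left hyj,
        min_eq_right (h1.trans hx1), min_eq_right (h1.trans hy1), sub_self]
    · have h1 : t (i + 1) ≤ t j := tm (i + 1) j (by omega) (by omega)
      have h2 : t j ≤ t (j + 1) := tm j (j + 1) (by omega) (by omega)
      rw [max_eq_right (hx2.trans h1), max_eq_right (hy2.trans h1),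
        min_eq_left h2, sub_self]

lemma clamp_sum {k : ℕ} {t : ℕ → ℝ} (tm : ∀ i j, i ≤ j → j ≤ k → t i ≤ t j) (x : ℝ) :
    ∑ i ∈ Finset.range k, (min (max x (t i)) (t (i + 1)) - t i)
      = min (max x (t 0)) (t k) - t 0 := by
  induction k with
  | zero => simp [min_eq_right (le_max_right x (t 0))]
  | succ k ih =>
    have tm' : ∀ i j, i ≤ j → j ≤ k → t i ≤ t j := fun i j hij hjk => tm i j hij (by omega)
    have h0k : t 0 ≤ t k := tm 0 k (by omega) (by omega)
    have hk1 : t k ≤ t (k + 1) := tm k (k + 1) (by omega) (by omega)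
    rw [Finset.sum_range_succ, ih tm']
    rcases le_total x (t k) with hx | hx
    · have hA : max x (t 0) ≤ t k := max_le hx h0k
      rw [max_eq_right hx, min_eq_left hk1, min_eq_left hA, min_eq_left (hA.trans hk1)]
      ring
    · have h0x : t 0 ≤ x := h0k.trans hx
      rw [max_eq_left hx, max_eq_left h0x, min_eq_right hx]
      ring

lemma clamp_le_clamp {lo hi x y : ℝ} (hxy : x ≤ y) :
    min (max y lo) hi - min (max x lo) hi ≤ y - x := by
  simp only [min_def, max_def]
  split_ifs <;> linarith

lemma pl_lip {k : ℕ} {t a : ℕ → ℝ} {C : ℝ} (hC : 0 ≤ C)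
    (tm : ∀ i j, i ≤ j → j ≤ k → t i ≤ t j) (ha : ∀ i < k, |a i| ≤ C)
    {x y : ℝ} (hxy : x ≤ y) : |pl k t a y - pl k t a x| ≤ C * (y - x) := by
  unfold pl
  rw [← Finset.sum_sub_distrib]
  have hterm : ∀ i ∈ Finset.range k,
      a i * (min (max y (t i)) (t (i+1)) - t i) - a i * (min (max x (t i)) (t (i+1)) - t i)
        = a i * (min (max y (t i)) (t (i+1)) - min (max x (t i)) (t (i+1))) := by
    intro i _; ring
  rw [Finset.sum_congr rfl hterm]
  calc |∑ i ∈ Finset.range k, a i * (min (max y (t i)) (t (i+1)) - min (max x (t i)) (t (i+1)))|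
      ≤ ∑ i ∈ Finset.range k, |a i * (min (max y (t i)) (t (i+1)) - min (max x (t i)) (t (i+1)))| :=
        Finset.abs_sum_le_sum_abs _ _
    _ ≤ ∑ i ∈ Finset.range k, C * (min (max y (t i)) (t (i+1)) - min (max x (t i)) (t (i+1))) := by
        apply Finset.sum_le_sum
        intro i hi
        rw [Finset.mem_range] at hi
        have hd : min (max x (t i)) (t (i+1)) ≤ min (max y (t i)) (t (i+1)) :=
          min_le_min (max_le_max hxy le_rfl) le_rfl
        rw [abs_mul, abs_of_nonneg (sub_nonneg.2 hd)]
        exact mul_le_mul_of_nonneg_right (ha i hi) (sub_nonneg.2 hd)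
    _ ≤ C * (y - x) := by
        rw [← Finset.mul_sum]
        apply mul_le_mul_of_nonneg_left _ hC
        have hsplit : ∀ i ∈ Finset.range k,
            min (max y (t i)) (t (i+1)) - min (max x (t i)) (t (i+1))
              = (min (max y (t i)) (t (i+1)) - t i) - (min (max x (t i)) (t (i+1)) - t i) := by
          intro i _; ring
        rw [Finset.sum_congr rfl hsplit, Finset.sum_sub_distrib, clamp_sum tm y, clamp_sum tm x]
        have := clamp_le_clamp (lo := t 0) (hi := t k) hxy
        linarith

lemma evar_lip (h : ℝ → ℝ) (C p q : ℝ) (hC : 0 ≤ C) (hpq : p ≤ q)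
    (hl : ∀ x ∈ Set.Icc p q, ∀ y ∈ Set.Icc p q, x ≤ y → |h y - h x| ≤ C * (y - x)) :
    eVariationOn h (Set.Icc p q) ≤ ENNReal.ofReal (C * (q - p)) := by
  apply iSup_le
  rintro ⟨n, u, hu, us⟩
  dsimp only
  calc ∑ i ∈ Finset.range n, edist (h (u (i + 1))) (h (u i))
      ≤ ∑ i ∈ Finset.range n, ENNReal.ofReal (C * (u (i + 1) - u i)) := by
        apply Finset.sum_le_sum
        intro i _
        rw [edist_dist, Real.dist_eq]
        exact ENNReal.ofReal_le_ofReal (hl _ (us i) _ (us (i + 1)) (hu (Nat.le_succ i)))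
    _ = ENNReal.ofReal (∑ i ∈ Finset.range n, (C * (u (i + 1) - u i))) :=
        (ENNReal.ofReal_sum_of_nonneg fun i _ =>
          mul_nonneg hC (sub_nonneg.2 (hu (Nat.le_succ i)))).symm
    _ ≤ ENNReal.ofReal (C * (q - p)) := by
        apply ENNReal.ofReal_le_ofReal
        rw [← Finset.mul_sum, Finset.sum_range_sub u]
        apply mul_le_mul_of_nonneg_left _ hC
        have h1 : u n ≤ q := (us n).2
        have h2 : p ≤ u 0 := (us 0).1
        linarith

lemma evar_chain (h : ℝ → ℝ) (k : ℕ) (z : ℕ → ℝ) (hz : ∀ i < k, z i ≤ z (i + 1)) :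
    eVariationOn h (Set.Icc (z 0) (z k))
      ≤ ∑ i ∈ Finset.range k, eVariationOn h (Set.Icc (z i) (z (i + 1))) := by
  induction k with
  | zero =>
    simp only [Finset.range_zero, Finset.sum_empty, Set.Icc_self]
    exact le_of_eq (eVariationOn.subsingleton h (Set.subsingleton_singleton))
  | succ k ih =>
    have hz' : ∀ i < k, z i ≤ z (i + 1) := fun i hi => hz i (by omega)
    have h0k : z 0 ≤ z k := mono_pair hz' 0 k (by omega) le_rfl
    have hk1 : z k ≤ z (k + 1) := hz k (by omega)
    have key := eVariationOn.Icc_add_Icc h (s := Set.Icc (z 0) (z (k + 1))) h0k hk1 ⟨h0k, hk1⟩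
    rw [Set.inter_eq_self_of_subset_right (Set.Icc_subset_Icc le_rfl hk1),
      Set.inter_eq_self_of_subset_right (Set.Icc_subset_Icc h0k le_rfl),
      Set.inter_self] at key
    rw [← key, Finset.sum_range_succ]
    exact add_le_add (ih hz') le_rfl

lemma pl_repr {k : ℕ} (f : ℝ → ℝ) (hk1 : 1 ≤ k) {t a : ℕ → ℝ} (ht0 : t 0 = 0) (htk : t k = 1)
    (hts : ∀ i < k, t i < t (i + 1)) (hf0 : f 0 = 0)
    (haff : ∀ i < k, ∀ s ∈ Set.Icc (t i) (t (i + 1)), f s = f (t i) + a i * (s - t i)) :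
    ∀ x ∈ Set.Icc (0:ℝ) 1, f x = pl k t a x := by
  classical
  have tm : ∀ i j, i ≤ j → j ≤ k → t i ≤ t j := mono_pair (fun i hi => (hts i hi).le)
  have hnode : ∀ i ≤ k, f (t i) = pl k t a (t i) := by
    intro i hi
    induction i with
    | zero => rw [ht0, hf0, pl_zero a ht0 tm]
    | succ i ihn =>
      have hik : i < k := by omega
      have hmem : t (i + 1) ∈ Set.Icc (t i) (t (i + 1)) := ⟨(hts i hik).le, le_rfl⟩
      have hmem0 : t i ∈ Set.Icc (t i) (t (i + 1)) := ⟨le_rfl, (hts i hik).le⟩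
      have h1 := haff i hik (t (i + 1)) hmem
      have h2 := pl_sub (a := a) tm hik hmem0 hmem
      have h3 := ihn (by omega)
      linarith
  intro x hx
  have hP0 : t 0 ≤ x := by rw [ht0]; exact hx.1
  set i := Nat.findGreatest (fun j => t j ≤ x) (k - 1) with hidef
  have hile : i ≤ k - 1 := Nat.findGreatest_le _
  have hik : i < k := by omega
  have hti : t i ≤ x := by
    have := Nat.findGreatest_spec (P := fun j => t j ≤ x) (n := k - 1) (Nat.zero_le _) hP0
    simpa [hidef] using this
  have htx : x ≤ t (i + 1) := by
    by_cases hie : i = k - 1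
    · have : i + 1 = k := by omega
      rw [this, htk]; exact hx.2
    · have hlt : i + 1 ≤ k - 1 := by omega
      have := Nat.findGreatest_is_greatest (P := fun j => t j ≤ x) (k := i + 1)
        (by omega) hlt
      exact (not_le.mp (by simpa using this)).le
  have h1 := haff i hik x ⟨hti, htx⟩
  have h2 := pl_sub (a := a) tm hik (x := t i) (y := x) ⟨le_rfl, (hts i hik).le⟩ ⟨hti, htx⟩
  have h3 := hnode i (by omega)
  linarith

lemma pl_mem {N k : ℕ} (hk1 : 1 ≤ k) (hkN : k ≤ N) {t a : ℕ → ℝ} (ht0 : t 0 = 0)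
    (htk : t k = 1) (hts : ∀ i < k, t i < t (i + 1)) (ha : ∀ i < k, |a i| ≤ (N : ℝ)) :
    pl k t a ∈ piecewiseLinearSet N := by
  have tm : ∀ i j, i ≤ j → j ≤ k → t i ≤ t j := mono_pair (fun i hi => (hts i hi).le)
  refine ⟨(pl_continuous k t a).continuousOn, pl_zero a ht0 tm, k, hk1, hkN, t, ht0, htk, hts,
    a, ha, ?_⟩
  intro i hi s hs
  have h2 := pl_sub (a := a) tm hi (x := t i) (y := s) ⟨le_rfl, (hts i hi).le⟩ hs
  linarith

set_option maxHeartbeats 2000000 in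
/-- `A_N` is totally bounded in the variation metric: for every `ε > 0` there is a finite
subset `F ⊆ A_N` such that every `f ∈ A_N` is within variation-distance `ε` of some `g ∈ F`. -/
theorem stmt4 (N : ℕ) (hN : 1 ≤ N) :
    ∀ ε : ℝ, 0 < ε →
      ∃ F : Finset (ℝ → ℝ), (↑F : Set (ℝ → ℝ)) ⊆ piecewiseLinearSet N ∧
        ∀ f ∈ piecewiseLinearSet N, ∃ g ∈ F,
          eVariationOn (f - g) (Set.Icc 0 1) < ENNReal.ofReal ε := by
  intro ε hε
  have hNR : (0:ℝ) < N := by exact_mod_cast hN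
  set Mn : ℕ := max 1 ⌈(8 * (N:ℝ) ^ 2) / ε⌉₊ with hMdef
  set Kn : ℕ := max 1 ⌈(4 * (N:ℝ)) / ε⌉₊ with hKdef
  have hM1 : 1 ≤ Mn := le_max_left _ _
  have hK1 : 1 ≤ Kn := le_max_left _ _
  have hMpos : (0:ℝ) < Mn := by exact_mod_cast hM1
  have hKpos : (0:ℝ) < Kn := by exact_mod_cast hK1
  have hMR : (8 * (N:ℝ) ^ 2) / ε ≤ Mn := by
    refine (Nat.le_ceil _).trans (Nat.cast_le.mpr ?_)
    exact (le_max_right 1 _).trans_eq hMdef.symm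
  have hKR : (4 * (N:ℝ)) / ε ≤ Kn := by
    refine (Nat.le_ceil _).trans (Nat.cast_le.mpr ?_)
    exact (le_max_right 1 _).trans_eq hKdef.symm
  set M₂ : ℕ := Mn * (N + 1) with hM₂def
  have hM₂pos : (0:ℝ) < M₂ := by
    have : 1 ≤ M₂ := Nat.one_le_iff_ne_zero.2 (by positivity)
    exact_mod_cast this
  set φ : (Fin (N + 1) × (Fin (N + 1) → Fin (M₂ + 1)) × (Fin N → Fin (2 * Kn + 1))) →
      (ℝ → ℝ) := fun p =>
    pl (p.1 : ℕ) (fun i => (((p.2.1 ⟨min i N, by omega⟩ : Fin (M₂ + 1)) : ℕ) : ℝ) / (M₂ : ℝ))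
      (fun i => (((p.2.2 ⟨min i (N - 1), by omega⟩ : Fin (2 * Kn + 1)) : ℕ) : ℝ)
        * ((N : ℝ) / (Kn : ℝ)) - N) with hφdef
  have hfin : (Set.range φ ∩ piecewiseLinearSet N).Finite :=
    (Set.finite_range φ).inter_of_left _
  refine ⟨hfin.toFinset, ?_, ?_⟩
  · rw [Set.Finite.coe_toFinset]; exact Set.inter_subset_right
  rintro f ⟨hfc, hf0, k, hk1, hkN, t, ht0, htk, hts, a, haN, haff⟩
  have tm : ∀ i j, i ≤ j → j ≤ k → t i ≤ t j := mono_pair (fun i hi => (hts i hi).le)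
  have ht01 : ∀ i ≤ k, 0 ≤ t i ∧ t i ≤ 1 := fun i hi =>
    ⟨ht0 ▸ tm 0 i (Nat.zero_le _) hi, htk ▸ tm i k hi le_rfl⟩
  have htlt1 : ∀ i < k, t i < 1 :=
    fun i hi => lt_of_lt_of_le (hts i hi) (htk ▸ tm (i + 1) k hi le_rfl)
  -- breakpoint data
  set U : ℕ → ℕ := fun i => if i < k then ⌊t i * Mn⌋₊ * (N + 1) + i else M₂ with hUdef
  set B : ℕ → ℕ := fun i => if i < k then ⌊(a i + N) * Kn / N⌋₊ else 0 with hBdef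
  have hUlt : ∀ i < k, ⌊t i * Mn⌋₊ < Mn := by
    intro i hi
    rw [Nat.floor_lt (mul_nonneg (ht01 i hi.le).1 hMpos.le)]
    calc t i * Mn < 1 * Mn := mul_lt_mul_of_pos_right (htlt1 i hi) hMpos
      _ = Mn := one_mul _
  have hUltM₂ : ∀ i < k, U i < M₂ := by
    intro i hi
    rw [hUdef]; dsimp only; rw [if_pos hi]
    obtain ⟨m, hm⟩ : ∃ m, Mn = m + 1 := ⟨Mn - 1, by omega⟩
    have h1 : ⌊t i * Mn⌋₊ ≤ m := by have := hUlt i hi; omega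
    have h2 : ⌊t i * Mn⌋₊ * (N + 1) ≤ m * (N + 1) := Nat.mul_le_mul_right _ h1
    have h3 : M₂ = m * (N + 1) + (N + 1) := by rw [hM₂def, hm, Nat.succ_mul]
    omega
  have hUleM₂ : ∀ i, U i ≤ M₂ := by
    intro i
    by_cases hi : i < k
    · exact (hUltM₂ i hi).le
    · rw [hUdef]; dsimp only; rw [if_neg hi]
  have hU0 : U 0 = 0 := by
    have h0k : 0 < k := hk1
    rw [hUdef]; dsimp only; rw [if_pos h0k, ht0]
    simp
  have hUk : U k = M₂ := by rw [hUdef]; dsimp only; rw [if_neg (lt_irrefl k)]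
  have hUmono : ∀ i < k, U i < U (i + 1) := by
    intro i hi
    by_cases h2 : i + 1 < k
    · rw [hUdef]; dsimp only; rw [if_pos hi, if_pos h2]
      have hfl : ⌊t i * Mn⌋₊ ≤ ⌊t (i + 1) * Mn⌋₊ :=
        Nat.floor_le_floor (mul_le_mul_of_nonneg_right (hts i hi).le hMpos.le)
      have := Nat.mul_le_mul_right (N + 1) hfl
      omega
    · have h3 : ¬ (i + 1 < k) := h2
      rw [hUdef]; dsimp only; rw [if_pos hi, if_neg h3]
      have := hUltM₂ i hi
      rw [hUdef] at this; dsimp only at this; rw [if_pos hi] at this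
      exact this
  -- real-valued breakpoints and slopes
  set u : ℕ → ℝ := fun i => (U i : ℝ) / M₂ with hudef
  set b : ℕ → ℝ := fun i => (B i : ℝ) * ((N : ℝ) / Kn) - N with hbdef
  have hu0 : u 0 = 0 := by rw [hudef]; dsimp only; rw [hU0]; simp
  have huk : u k = 1 := by
    rw [hudef]; dsimp only; rw [hUk]; field_simp
  have humono : ∀ i < k, u i < u (i + 1) := by
    intro i hi
    rw [hudef]; dsimp only
    have : (U i : ℝ) < U (i + 1) := by exact_mod_cast hUmono i hi
    exact div_lt_div_of_pos_right this hM₂pos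
  have humono_pair : ∀ i j, i ≤ j → j ≤ k → u i ≤ u j :=
    mono_pair (fun i hi => (humono i hi).le)
  have hunear : ∀ i ≤ k, t i - 1 / Mn ≤ u i ∧ u i ≤ t i + 1 / Mn := by
    intro i hi
    have hMninv : 0 < 1 / (Mn:ℝ) := by positivity
    by_cases hik : i < k
    · have hU : (U i : ℝ) = (⌊t i * Mn⌋₊ : ℝ) * (N + 1) + i := by
        rw [hUdef]; dsimp only; rw [if_pos hik]; push_cast; ring
      set fl : ℝ := (⌊t i * Mn⌋₊ : ℝ) with hfldef
      have hfl1 : fl ≤ t i * Mn := Nat.floor_le (mul_nonneg (ht01 i hi).1 hMpos.le)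
      have hfl2 : t i * Mn - 1 < fl := Nat.sub_one_lt_floor _
      have hden : (0:ℝ) < (Mn:ℝ) * ((N:ℝ) + 1) := by positivity
      have hM₂cast : (M₂ : ℝ) = (Mn:ℝ) * ((N:ℝ) + 1) := by rw [hM₂def]; push_cast; ring
      have hui : u i = (fl * ((N:ℝ) + 1) + i) / ((Mn:ℝ) * ((N:ℝ) + 1)) := by
        rw [hudef]; dsimp only; rw [hU, hM₂cast]
      have hiN : (i : ℝ) ≤ N := by exact_mod_cast le_trans hik.le hkN
      constructor
      · rw [hui, le_div_iff₀ hden]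
        have expand : (t i - 1 / (Mn:ℝ)) * ((Mn:ℝ) * ((N:ℝ) + 1))
            = (t i * Mn - 1) * ((N:ℝ) + 1) := by field_simp; try ring
        rw [expand]
        have key : (t i * Mn - 1) * ((N:ℝ) + 1) ≤ fl * ((N:ℝ) + 1) :=
          mul_le_mul_of_nonneg_right hfl2.le (by positivity)
        have : (0:ℝ) ≤ i := Nat.cast_nonneg i
        linarith
      · rw [hui, div_le_iff₀ hden]
        have expand : (t i + 1 / (Mn:ℝ)) * ((Mn:ℝ) * ((N:ℝ) + 1))
            = (t i * Mn) * ((N:ℝ) + 1) + ((N:ℝ) + 1) := by field_simp; try ring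
        rw [expand]
        have key : fl * ((N:ℝ) + 1) ≤ (t i * Mn) * ((N:ℝ) + 1) :=
          mul_le_mul_of_nonneg_right hfl1 (by positivity)
        linarith
    · have hik' : i = k := by omega
      subst hik'
      rw [huk, htk]
      constructor
      · linarith
      · linarith
  -- slope facts
  have hbfacts : ∀ i < k, b i ≤ a i ∧ a i - b i ≤ (N:ℝ) / Kn ∧ |b i| ≤ N := by
    intro i hik
    have hB : (B i : ℝ) = (⌊(a i + N) * Kn / N⌋₊ : ℝ) := by
      rw [hBdef]; dsimp only; rw [if_pos hik]
    have haiN := abs_le.mp (haN i hik)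
    have hxnn : 0 ≤ (a i + N) * Kn / N := by
      apply div_nonneg _ hNR.le
      apply mul_nonneg _ hKpos.le
      linarith [haiN.1]
    have hβ1 : (B i : ℝ) ≤ (a i + N) * Kn / N := by rw [hB]; exact Nat.floor_le hxnn
    have hβ2 : (a i + N) * Kn / N - 1 < (B i : ℝ) := by rw [hB]; exact Nat.sub_one_lt_floor _
    have hid1 : ((a i + N) * Kn / N) * ((N:ℝ) / Kn) = a i + N := by field_simp
    have hble : b i ≤ a i := by
      have h1 : (B i : ℝ) * ((N:ℝ) / Kn) ≤ ((a i + N) * Kn / N) * ((N:ℝ) / Kn) :=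
        mul_le_mul_of_nonneg_right hβ1 (by positivity)
      rw [hid1] at h1
      rw [hbdef]; dsimp only; linarith
    have hbge : a i - (N:ℝ) / Kn ≤ b i := by
      have h1 : ((a i + N) * Kn / N - 1) * ((N:ℝ) / Kn) ≤ (B i : ℝ) * ((N:ℝ) / Kn) :=
        mul_le_mul_of_nonneg_right hβ2.le (by positivity)
      have h2 : ((a i + N) * Kn / N - 1) * ((N:ℝ) / Kn) = a i + N - (N:ℝ) / Kn := by
        field_simp; try ring
      rw [h2] at h1
      rw [hbdef]; dsimp only; linarith
    refine ⟨hble, by linarith, abs_le.2 ⟨?_, hble.trans haiN.2⟩⟩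
    have h0 : (0:ℝ) ≤ (B i : ℝ) * ((N:ℝ) / Kn) := by positivity
    rw [hbdef]; dsimp only; linarith
  have hbabsN : ∀ i < k, |b i| ≤ (N:ℝ) := fun i hi => (hbfacts i hi).2.2
  have hB2K : ∀ i, B i ≤ 2 * Kn := by
    intro i
    rw [hBdef]; dsimp only
    split_ifs with h
    · have haiN := abs_le.mp (haN i h)
      have hle : (a i + N) * Kn / N ≤ ((2 * Kn : ℕ) : ℝ) := by
        rw [div_le_iff₀ hNR]; push_cast
        nlinarith [hKpos, haiN.2]
      calc ⌊(a i + N) * Kn / N⌋₊ ≤ ⌊((2 * Kn : ℕ) : ℝ)⌋₊ := Nat.floor_le_floor hle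
        _ = 2 * Kn := Nat.floor_natCast _
    · omega
  -- the parameter and the approximant
  set p : Fin (N + 1) × (Fin (N + 1) → Fin (M₂ + 1)) × (Fin N → Fin (2 * Kn + 1)) :=
    (⟨k, by omega⟩, fun i => ⟨U i, by have := hUleM₂ (i : ℕ); omega⟩,
      fun i => ⟨B i, by have := hB2K (i : ℕ); omega⟩) with hpdef
  have hg : φ p = pl k u b := by
    rw [hφdef, hpdef]
    dsimp only
    apply pl_congr
    · intro i hi
      have hmin : min i N = i := by omega
      rw [hudef]; dsimp only; rw [hmin]
    · intro i hi
      have hmin : min i (N - 1) = i := by omega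
      rw [hbdef]; dsimp only; rw [hmin]
  have hgA : φ p ∈ piecewiseLinearSet N := by
    rw [hg]; exact pl_mem hk1 hkN hu0 huk humono hbabsN
  refine ⟨φ p, (Set.Finite.mem_toFinset hfin).2 ⟨⟨p, rfl⟩, hgA⟩, ?_⟩
  -- variation estimate
  have hfeq := pl_repr f hk1 ht0 htk hts hf0 haff
  have heqOn : Set.EqOn (f - φ p) (fun x => pl k t a x - pl k u b x) (Set.Icc 0 1) := by
    intro x hx
    simp only [Pi.sub_apply, hg]
    rw [hfeq x hx]
  rw [eVariationOn.eq_of_eqOn heqOn]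
  set h : ℝ → ℝ := fun x => pl k t a x - pl k u b x with hhdef
  set z : ℕ → ℝ := fun i => min (t i) (u i) with hzdef
  have hz : ∀ i < k, z i ≤ z (i + 1) := fun i hi =>
    min_le_min (hts i hi).le (humono i hi).le
  have hz0 : z 0 = 0 := by rw [hzdef]; dsimp only; rw [ht0, hu0]; simp
  have hzk : z k = 1 := by rw [hzdef]; dsimp only; rw [htk, huk]; simp
  have hper : ∀ i < k, eVariationOn h (Set.Icc (z i) (z (i + 1)))
      ≤ ENNReal.ofReal (2 * N * (1 / Mn) + ((N:ℝ) / Kn) * (z (i + 1) - z i)) := by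
    intro i hik
    have hz_le : z i ≤ z (i + 1) := hz i hik
    set d : ℝ := max (z i) (min (z (i + 1)) (max (t i) (u i))) with hddef
    have hzd1 : z i ≤ d := le_max_left _ _
    have hzd2 : d ≤ z (i + 1) := max_le hz_le (min_le_left _ _)
    have key := eVariationOn.Icc_add_Icc h (s := Set.Icc (z i) (z (i + 1))) hzd1 hzd2 ⟨hzd1, hzd2⟩
    rw [Set.inter_eq_self_of_subset_right (Set.Icc_subset_Icc le_rfl hzd2),
      Set.inter_eq_self_of_subset_right (Set.Icc_subset_Icc hzd1 le_rfl),
      Set.inter_self] at key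
    rw [← key, ENNReal.ofReal_add (by positivity)
      (mul_nonneg (by positivity) (sub_nonneg.2 hz_le))]
    apply add_le_add
    · -- lipschitz 2N bound on short interval
      have hlip : ∀ x ∈ Set.Icc (z i) d, ∀ y ∈ Set.Icc (z i) d, x ≤ y →
          |h y - h x| ≤ (2 * N) * (y - x) := by
        intro x _ y _ hxy
        have h1 := pl_lip (t := t) (a := a) (C := (N:ℝ)) hNR.le tm haN hxy
        have h2 := pl_lip (t := u) (a := b) (C := (N:ℝ)) hNR.le humono_pair hbabsN hxy
        have hrw : h y - h x = (pl k t a y - pl k t a x) - (pl k u b y - pl k u b x) := by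
          rw [hhdef]; ring
        rw [hrw, sub_eq_add_neg]
        calc |(pl k t a y - pl k t a x) + -(pl k u b y - pl k u b x)|
            ≤ |pl k t a y - pl k t a x| + |-(pl k u b y - pl k u b x)| := abs_add_le _ _
          _ ≤ (2 * N) * (y - x) := by rw [abs_neg]; linarith
      have hd_small : d - z i ≤ 1 / Mn := by
        have hdle : d ≤ max (t i) (u i) :=
          max_le ((min_le_left _ _).trans (le_max_left _ _)) (min_le_right _ _)
        have hnear := hunear i hik.le
        have hzi : z i = min (t i) (u i) := by rw [hzdef]
        have hmm : max (t i) (u i) - min (t i) (u i) ≤ 1 / Mn := by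
          rcases le_total (t i) (u i) with hc | hc
          · rw [max_eq_right hc, min_eq_left hc]; linarith [hnear.2]
          · rw [max_eq_left hc, min_eq_right hc]; linarith [hnear.1]
        rw [hzi]; linarith
      calc eVariationOn h (Set.Icc (z i) d)
          ≤ ENNReal.ofReal ((2 * N) * (d - z i)) :=
            evar_lip h (2 * N) (z i) d (by positivity) hzd1 hlip
        _ ≤ ENNReal.ofReal (2 * N * (1 / Mn)) :=
            ENNReal.ofReal_le_ofReal (mul_le_mul_of_nonneg_left hd_small (by positivity))
    · -- slope-difference bound on the rest
      by_cases hd : d < z (i + 1)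
      · have hpid : max (t i) (u i) ≤ d := by
          rcases le_total (z (i + 1)) (max (t i) (u i)) with hc | hc
          · exfalso
            have : d = z (i + 1) := by
              rw [hddef, min_eq_left hc, max_eq_right hz_le]
            exact absurd (this ▸ hd) (lt_irrefl _)
          · rw [hddef, min_eq_right hc]
            exact le_max_right _ _
        have hsub1 : Set.Icc d (z (i + 1)) ⊆ Set.Icc (t i) (t (i + 1)) := by
          apply Set.Icc_subset_Icc
          · exact (le_max_left _ _).trans hpid
          · rw [hzdef]; exact min_le_left _ _
        have hsub2 : Set.Icc d (z (i + 1)) ⊆ Set.Icc (u i) (u (i + 1)) := by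
          apply Set.Icc_subset_Icc
          · exact (le_max_right _ _).trans hpid
          · rw [hzdef]; exact min_le_right _ _
        have hbf := hbfacts i hik
        have hlip2 : ∀ x ∈ Set.Icc d (z (i + 1)), ∀ y ∈ Set.Icc d (z (i + 1)), x ≤ y →
            |h y - h x| ≤ ((N:ℝ) / Kn) * (y - x) := by
          intro x hx y hy hxy
          have e1 := pl_sub (a := a) tm hik (hsub1 hx) (hsub1 hy)
          have e2 := pl_sub (a := b) humono_pair hik (hsub2 hx) (hsub2 hy)
          have hrw : h y - h x = (a i - b i) * (y - x) := by
            rw [hhdef]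
            dsimp only
            linear_combination e1 - e2
          rw [hrw, abs_mul, abs_of_nonneg (sub_nonneg.2 hbf.1),
            abs_of_nonneg (sub_nonneg.2 hxy)]
          exact mul_le_mul_of_nonneg_right hbf.2.1 (sub_nonneg.2 hxy)
        calc eVariationOn h (Set.Icc d (z (i + 1)))
            ≤ ENNReal.ofReal (((N:ℝ) / Kn) * (z (i + 1) - d)) :=
              evar_lip h ((N:ℝ) / Kn) d (z (i + 1)) (by positivity) hzd2 hlip2
          _ ≤ ENNReal.ofReal (((N:ℝ) / Kn) * (z (i + 1) - z i)) := by
              apply ENNReal.ofReal_le_ofReal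
              apply mul_le_mul_of_nonneg_left _ (by positivity)
              linarith
      · have hdz : d = z (i + 1) := le_antisymm hzd2 (not_lt.mp hd)
        rw [hdz, Set.Icc_self]
        exact le_of_eq_of_le (eVariationOn.subsingleton h Set.subsingleton_singleton)
          (zero_le)
  calc eVariationOn h (Set.Icc 0 1) = eVariationOn h (Set.Icc (z 0) (z k)) := by
        rw [hz0, hzk]
    _ ≤ ∑ i ∈ Finset.range k, eVariationOn h (Set.Icc (z i) (z (i + 1))) := evar_chain h k z hz
    _ ≤ ∑ i ∈ Finset.range k,
          ENNReal.ofReal (2 * N * (1 / Mn) + ((N:ℝ) / Kn) * (z (i + 1) - z i)) :=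
        Finset.sum_le_sum (fun i hi => hper i (Finset.mem_range.mp hi))
    _ = ENNReal.ofReal (∑ i ∈ Finset.range k,
          (2 * N * (1 / Mn) + ((N:ℝ) / Kn) * (z (i + 1) - z i))) :=
        (ENNReal.ofReal_sum_of_nonneg (fun i hi => add_nonneg (by positivity)
          (mul_nonneg (by positivity) (sub_nonneg.2 (hz i (Finset.mem_range.mp hi)))))).symm
    _ < ENNReal.ofReal ε := by
        rw [Finset.sum_add_distrib, Finset.sum_const, Finset.card_range, nsmul_eq_mul,
          ← Finset.mul_sum, Finset.sum_range_sub z, hz0, hzk]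
        rw [ENNReal.ofReal_lt_ofReal_iff hε]
        have hkNR : (k:ℝ) ≤ N := by exact_mod_cast hkN
        have h8 : 8 * (N:ℝ) ^ 2 ≤ Mn * ε := (div_le_iff₀ hε).mp hMR
        have h4 : 4 * (N:ℝ) ≤ Kn * ε := (div_le_iff₀ hε).mp hKR
        have e1 : (k:ℝ) * (2 * (N:ℝ) * (1 / Mn)) ≤ 2 * (N:ℝ) ^ 2 / Mn := by
          have := mul_le_mul_of_nonneg_right hkNR
            (show (0:ℝ) ≤ 2 * (N:ℝ) * (1 / Mn) by positivity)
          calc (k:ℝ) * (2 * (N:ℝ) * (1 / Mn)) ≤ (N:ℝ) * (2 * (N:ℝ) * (1 / Mn)) := this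
            _ = 2 * (N:ℝ) ^ 2 / Mn := by field_simp; try ring
        have e2 : 2 * (N:ℝ) ^ 2 / Mn ≤ ε / 4 := by
          rw [div_le_div_iff₀ hMpos (by norm_num : (0:ℝ) < 4)]
          linarith
        have e3 : (N:ℝ) / Kn ≤ ε / 4 := by
          rw [div_le_div_iff₀ hKpos (by norm_num : (0:ℝ) < 4)]
          linarith
        linarith
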